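/- Let n ≥ 1, x ∈ ℂⁿ, and y = Fx where F = F_n/√n is the normalized Fourier matrix. For p ≥ 1 and a partition π of {1,…,p}, define f_π(x) = Σ x_{i_1}⋯x_{i_p}, the sum over all multi-indices i ∈ (ℤ/nℤ)^p with i_a = i_b whenever a and b lie in the same block of π, and g_π(x) = Σ x_{i_1}⋯x_{i_p}, the sum over all multi-indices i ∈ (ℤ/nℤ)^p with Σ_{r∈β} i_r = 0 in ℤ/nℤ for every block β of π. Then f_π(y) = n^{|π| − p/2} g_π(x) and g_π(y) = n^{p/2 − |π|} f_π(x), where |π| is the number of blocks of π. Consequently, for a circulant complex Hadamard matrix H with first row x, all the numbers f_π(x), g_π(x) (π ranging over partitions of {1,…,p}) are real if and only if all the numbers f_π(y), g_π(y) are real; that is, the set X_p of such matrices is stable under the duality H ↦ Φ(H), where Φ(H) is the circulant matrix with first row Fx. -/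

import Mathlib

open Complex Matrix

open scoped Classical in
/-- `f_π(x) = Σ_{i ∈ π} x_{i_1} ⋯ x_{i_p}`: the sum over multi-indices that are
constant on each block of the partition `π`. -/
noncomputable def fPar {n p : ℕ} [NeZero n]
    (π : Finpartition (Finset.univ : Finset (Fin p))) (x : ZMod n → ℂ) : ℂ :=
  ∑ i ∈ Finset.univ.filter
      (fun i : Fin p → ZMod n => ∀ B ∈ π.parts, ∀ a ∈ B, ∀ b ∈ B, i a = i b),
    ∏ a : Fin p, x (i a)

open scoped Classical in
/-- `g_π(x) = Σ_{i ⊢ π} x_{i_1} ⋯ x_{i_p}`: the sum over multi-indices whose sum over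
each block of the partition `π` vanishes. -/
noncomputable def gPar {n p : ℕ} [NeZero n]
    (π : Finpartition (Finset.univ : Finset (Fin p))) (x : ZMod n → ℂ) : ℂ :=
  ∑ i ∈ Finset.univ.filter
      (fun i : Fin p → ZMod n => ∀ B ∈ π.parts, ∑ r ∈ B, i r = 0),
    ∏ a : Fin p, x (i a)

/-- The `n×n` Fourier matrix `(w^{ij})` with `w = e^{2πi/n}`. -/
noncomputable def Fourier (n : ℕ) : Matrix (ZMod n) (ZMod n) ℂ :=
  fun i j => Complex.exp (2 * Real.pi * Complex.I * (i.val * j.val) / n)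

/-- The normalized Fourier matrix `F = F_n / √n`. -/
noncomputable def NFourier (n : ℕ) : Matrix (ZMod n) (ZMod n) ℂ :=
  (1 / (Real.sqrt n : ℂ)) • Fourier n

/-- A complex Hadamard matrix: unimodular entries and pairwise orthogonal rows. -/
def IsHadamard {n : ℕ} [NeZero n] (H : Matrix (ZMod n) (ZMod n) ℂ) : Prop :=
  (∀ i j, ‖H i j‖ = 1) ∧ H * Hᴴ = (n : ℂ) • 1

/-- For `y = Fx` one has `f_π(y) = n^{|π|-p/2} g_π(x)` and `g_π(y) = n^{p/2-|π|} f_π(x)`;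
consequently the set `X_p` of circulant complex Hadamard matrices whose first row `x`
has all `f_π(x), g_π(x)` real is stable under the duality `x ↦ Fx`. -/
lemma addChar_sum {A M : Type*} [AddCommMonoid A] [CommMonoid M] (ψ : AddChar A M)
    {ι : Type*} (s : Finset ι) (f : ι → A) :
    ψ (∑ a ∈ s, f a) = ∏ a ∈ s, ψ (f a) := by
  classical
  induction s using Finset.induction_on with
  | empty => simp
  | insert _ _ h ih => simp [Finset.sum_insert h, Finset.prod_insert h, AddChar.map_add_eq_mul, ih]

lemma char_sum (n : ℕ) [NeZero n] (s : ZMod n) :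
    ∑ j : ZMod n, ZMod.stdAddChar (j * s) = if s = 0 then (n : ℂ) else 0 := by
  rw [AddChar.sum_mulShift s (ZMod.isPrimitive_stdAddChar n)]
  simp [ZMod.card]

lemma fourier_eq (n : ℕ) [NeZero n] (i j : ZMod n) :
    Fourier n i j = ZMod.stdAddChar (i * j) := by
  have : (i * j : ZMod n) = ((i.val * j.val : ℕ) : ZMod n) := by
    push_cast [ZMod.natCast_zmod_val]
    ring
  rw [this, ← Int.cast_natCast, ZMod.stdAddChar_coe]
  simp [Fourier]

lemma hconst (n p : ℕ) [NeZero n] (k : ℕ) :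
    ((1 / (Real.sqrt n : ℂ))) ^ p * (n : ℂ) ^ k
      = (((n : ℝ) ^ ((k : ℝ) - p / 2) : ℝ) : ℂ) := by
  have hn : (0:ℝ) < n := Nat.cast_pos.mpr (Nat.pos_of_ne_zero (NeZero.ne n))
  have h1 : ((1 / Real.sqrt n) ^ p * (n:ℝ) ^ k : ℝ) = (n:ℝ) ^ ((k : ℝ) - p / 2) := by
    rw [Real.sqrt_eq_rpow, one_div, ← Real.rpow_neg_one ((n:ℝ) ^ ((1:ℝ)/2)),
      ← Real.rpow_natCast (((n:ℝ) ^ ((1:ℝ)/2)) ^ (-1:ℝ)) p,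
      ← Real.rpow_mul hn.le, ← Real.rpow_mul hn.le,
      ← Real.rpow_natCast (n:ℝ) k, ← Real.rpow_add hn]
    ring_nf
  rw [show ((1 / (Real.sqrt n : ℂ))) ^ p * (n : ℂ) ^ k
      = (((1 / Real.sqrt n) ^ p * (n:ℝ) ^ k : ℝ) : ℂ) by push_cast; ring, h1]

lemma mulVec_apply (n : ℕ) [NeZero n] (x : ZMod n → ℂ) (j : ZMod n) :
    (NFourier n).mulVec x j
      = ∑ k : ZMod n, (1 / (Real.sqrt n : ℂ)) * (ZMod.stdAddChar (j * k) * x k) := by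
  simp only [NFourier, Matrix.mulVec, dotProduct, Matrix.smul_apply, smul_eq_mul,
    fourier_eq, mul_assoc]

open scoped Classical in
lemma inner_char_sum (n p : ℕ) [NeZero n]
    (π : Finpartition (Finset.univ : Finset (Fin p))) (g : Fin p → ZMod n) :
    ∑ i ∈ Finset.univ.filter
        (fun i : Fin p → ZMod n => ∀ B ∈ π.parts, ∀ a ∈ B, ∀ b ∈ B, i a = i b),
      ∏ a : Fin p, ZMod.stdAddChar (i a * g a)
    = if (∀ B ∈ π.parts, ∑ r ∈ B, g r = 0) then (n : ℂ) ^ π.parts.card else 0 := by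
  classical
  set e := (ZMod.stdAddChar : AddChar (ZMod n) ℂ) with he
  have hmem : ∀ a : Fin p, π.part a ∈ π.parts := fun a => π.part_mem.mpr (Finset.mem_univ a)
  set bwd : ({B // B ∈ π.parts} → ZMod n) → (Fin p → ZMod n) :=
    fun j a => j ⟨π.part a, hmem a⟩ with hbwd
  set fwd : (Fin p → ZMod n) → ({B // B ∈ π.parts} → ZMod n) :=
    fun i B => i (π.nonempty_of_mem_parts B.2).choose with hfwd
  have hchoose : ∀ B : {B // B ∈ π.parts}, (π.nonempty_of_mem_parts B.2).choose ∈ B.1 :=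
    fun B => (π.nonempty_of_mem_parts B.2).choose_spec
  have stepA : ∑ i ∈ Finset.univ.filter
        (fun i : Fin p → ZMod n => ∀ B ∈ π.parts, ∀ a ∈ B, ∀ b ∈ B, i a = i b),
      ∏ a : Fin p, e (i a * g a)
      = ∑ j : {B // B ∈ π.parts} → ZMod n, ∏ a : Fin p, e (bwd j a * g a) := by
    refine Finset.sum_nbij' fwd bwd ?_ ?_ ?_ ?_ ?_
    · intro i _; exact Finset.mem_univ _
    · intro j _
      simp only [Finset.mem_filter, Finset.mem_univ, true_and]
      intro B hB a ha b hb
      have h1 : π.part a = B := π.part_eq_of_mem hB ha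
      have h2 : π.part b = B := π.part_eq_of_mem hB hb
      exact congrArg j (Subtype.ext (h1.trans h2.symm))
    · intro i hi
      funext a
      simp only [Finset.mem_filter, Finset.mem_univ, true_and] at hi
      exact hi (π.part a) (hmem a) _ (hchoose ⟨π.part a, hmem a⟩) a
        (π.mem_part (Finset.mem_univ a))
    · intro j _
      funext B
      have : π.part (π.nonempty_of_mem_parts B.2).choose = B.1 :=
        π.part_eq_of_mem B.2 (hchoose B)
      exact congrArg j (Subtype.ext this)
    · intro i hi
      apply Finset.prod_congr rfl
      intro a _
      simp only [Finset.mem_filter, Finset.mem_univ, true_and] at hi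
      have : bwd (fwd i) a = i a :=
        (hi (π.part a) (hmem a) _ (hchoose ⟨π.part a, hmem a⟩) a
          (π.mem_part (Finset.mem_univ a)))
      rw [this]
  rw [stepA]
  have stepB : ∀ j : {B // B ∈ π.parts} → ZMod n,
      ∏ a : Fin p, e (bwd j a * g a)
      = ∏ B : {B // B ∈ π.parts}, e (j B * ∑ r ∈ B.1, g r) := by
    intro j
    have h1 : ∀ B : {B // B ∈ π.parts},
        e (j B * ∑ r ∈ B.1, g r) = ∏ r ∈ B.1, e (bwd j r * g r) := by
      intro B
      rw [Finset.mul_sum, addChar_sum]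
      refine Finset.prod_congr rfl fun r hr => ?_
      have hpr : π.part r = B.1 := π.part_eq_of_mem B.2 hr
      have : (⟨π.part r, hmem r⟩ : {B // B ∈ π.parts}) = B := Subtype.ext hpr
      simp only [hbwd, this]
    calc ∏ a : Fin p, e (bwd j a * g a)
        = ∏ B ∈ π.parts, ∏ r ∈ B, e (bwd j r * g r) := by
          have hb := Finset.prod_biUnion (s := π.parts) (t := id)
            (f := fun a => e (bwd j a * g a)) π.supIndep.pairwiseDisjoint
          rw [π.biUnion_parts] at hb
          exact hb
      _ = ∏ B : {B // B ∈ π.parts}, ∏ r ∈ B.1, e (bwd j r * g r) :=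
          (Finset.prod_coe_sort π.parts (fun C => ∏ r ∈ C, e (bwd j r * g r))).symm
      _ = ∏ B : {B // B ∈ π.parts}, e (j B * ∑ r ∈ B.1, g r) :=
          Finset.prod_congr rfl fun B _ => (h1 B).symm
  rw [Finset.sum_congr rfl fun j _ => stepB j]
  rw [← Fintype.prod_sum (fun (B : {B // B ∈ π.parts}) (c : ZMod n) => e (c * ∑ r ∈ B.1, g r))]
  have stepC : ∀ B : {B // B ∈ π.parts},
      ∑ c : ZMod n, e (c * ∑ r ∈ B.1, g r)
      = if (∑ r ∈ B.1, g r) = 0 then (n : ℂ) else 0 := fun B => char_sum n _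
  rw [Finset.prod_congr rfl fun B _ => stepC B]
  by_cases h : ∀ B ∈ π.parts, ∑ r ∈ B, g r = 0
  · rw [if_pos h]
    rw [Finset.prod_congr rfl fun (B : {B // B ∈ π.parts}) _ => if_pos (h B.1 B.2)]
    rw [Finset.prod_const, Finset.card_univ, Fintype.card_coe]
  · rw [if_neg h]
    push_neg at h
    obtain ⟨B, hB, hS⟩ := h
    exact Finset.prod_eq_zero (Finset.mem_univ (⟨B, hB⟩ : {B // B ∈ π.parts})) (if_neg hS)

open scoped Classical in
lemma fPar_mulVec (n p : ℕ) [NeZero n]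
    (π : Finpartition (Finset.univ : Finset (Fin p))) (x : ZMod n → ℂ) :
    fPar π ((NFourier n).mulVec x)
      = (((n : ℝ) ^ ((π.parts.card : ℝ) - p / 2) : ℝ) : ℂ) * gPar π x := by
  classical
  set c : ℂ := 1 / (Real.sqrt n : ℂ) with hc
  have expand : ∀ i : Fin p → ZMod n,
      ∏ a : Fin p, (NFourier n).mulVec x (i a)
      = ∑ g : Fin p → ZMod n,
          c ^ p * ((∏ a : Fin p, ZMod.stdAddChar (i a * g a)) * ∏ a : Fin p, x (g a)) := by
    intro i
    rw [Finset.prod_congr rfl fun a _ => _root_.mulVec_apply n x (i a)]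
    rw [Fintype.prod_sum (fun (a : Fin p) (k : ZMod n) =>
      c * (ZMod.stdAddChar (i a * k) * x k))]
    refine Finset.sum_congr rfl fun g _ => ?_
    rw [Finset.prod_mul_distrib, Finset.prod_const, Finset.prod_mul_distrib, Finset.card_univ,
      Fintype.card_fin]
  unfold fPar
  rw [Finset.sum_congr rfl fun i _ => expand i, Finset.sum_comm]
  have inner : ∀ g : Fin p → ZMod n,
      (∑ i ∈ Finset.univ.filter
          (fun i : Fin p → ZMod n => ∀ B ∈ π.parts, ∀ a ∈ B, ∀ b ∈ B, i a = i b),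
        c ^ p * ((∏ a : Fin p, ZMod.stdAddChar (i a * g a)) * ∏ a : Fin p, x (g a)))
      = if (∀ B ∈ π.parts, ∑ r ∈ B, g r = 0)
          then (c ^ p * (n : ℂ) ^ π.parts.card) * ∏ a : Fin p, x (g a) else 0 := by
    intro g
    have comm : ∀ i : Fin p → ZMod n,
        c ^ p * ((∏ a : Fin p, ZMod.stdAddChar (i a * g a)) * ∏ a : Fin p, x (g a))
        = (∏ a : Fin p, ZMod.stdAddChar (i a * g a)) * (c ^ p * ∏ a : Fin p, x (g a)) := by
      intro i; ring
    rw [Finset.sum_congr rfl fun i _ => comm i, ← Finset.sum_mul, inner_char_sum n p π g]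
    split_ifs with h
    · ring
    · simp
  rw [Finset.sum_congr rfl fun g _ => inner g, Finset.sum_ite, Finset.sum_const_zero, add_zero,
    ← Finset.mul_sum, hconst n p π.parts.card]
  rfl

lemma double_mulVec (n : ℕ) [NeZero n] (x : ZMod n → ℂ) :
    (NFourier n).mulVec ((NFourier n).mulVec x) = fun j => x (-j) := by
  classical
  have hn : (0:ℝ) < n := Nat.cast_pos.mpr (Nat.pos_of_ne_zero (NeZero.ne n))
  funext j
  set c : ℂ := 1 / (Real.sqrt n : ℂ) with hc
  have hcc : (n : ℂ) * (c * c) = 1 := by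
    rw [hc]
    have h1 : (Real.sqrt n : ℂ) * (Real.sqrt n : ℂ) = (n : ℂ) := by
      rw [← Complex.ofReal_mul, Real.mul_self_sqrt hn.le]
      norm_cast
    have hne : (n:ℂ) ≠ 0 := Nat.cast_ne_zero.mpr (NeZero.ne n)
    rw [div_mul_div_comm, one_mul, h1, mul_one_div, div_self hne]
  rw [mulVec_apply]
  simp only [mulVec_apply, Finset.mul_sum]
  rw [Finset.sum_comm]
  have inner : ∀ m : ZMod n,
      (∑ k : ZMod n, c * (ZMod.stdAddChar (j * k) * (c * (ZMod.stdAddChar (k * m) * x m))))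
      = (if m = -j then (n:ℂ) * (c * c * x m) else 0) := by
    intro m
    have key : ∀ k : ZMod n,
        c * (ZMod.stdAddChar (j * k) * (c * (ZMod.stdAddChar (k * m) * x m)))
        = ZMod.stdAddChar (k * (j + m)) * (c * c * x m) := by
      intro k
      rw [show k * (j + m) = j * k + k * m by ring, AddChar.map_add_eq_mul]
      ring
    rw [Finset.sum_congr rfl fun k _ => key k, ← Finset.sum_mul, char_sum n (j + m)]
    by_cases h : m = -j
    · rw [if_pos (by simp [h]), if_pos h]
    · rw [if_neg (fun hh => h (eq_neg_of_add_eq_zero_right hh)), if_neg h, zero_mul]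
  rw [Finset.sum_congr rfl fun m _ => inner m, Finset.sum_ite_eq' Finset.univ (-j)]
  rw [if_pos (Finset.mem_univ _), ← mul_assoc, hcc, one_mul]

open scoped Classical in
lemma fPar_neg {n p : ℕ} [NeZero n]
    (π : Finpartition (Finset.univ : Finset (Fin p))) (x : ZMod n → ℂ) :
    fPar π (fun k => x (-k)) = fPar π x := by
  classical
  unfold fPar
  refine Finset.sum_nbij' (fun i a => -(i a)) (fun i a => -(i a)) ?_ ?_ ?_ ?_ ?_
  · intro i hi
    simp only [Finset.mem_filter, Finset.mem_univ, true_and] at hi ⊢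
    intro B hB a ha b hb
    rw [hi B hB a ha b hb]
  · intro i hi
    simp only [Finset.mem_filter, Finset.mem_univ, true_and] at hi ⊢
    intro B hB a ha b hb
    rw [hi B hB a ha b hb]
  · intro i _; funext a; simp
  · intro i _; funext a; simp
  · intro i _; rfl
theorem duality_partition_invariants
    (n : ℕ) [NeZero n] (p : ℕ) (hp : 1 ≤ p)
    (x y : ZMod n → ℂ) (hy : y = (NFourier n).mulVec x) :
    (∀ π : Finpartition (Finset.univ : Finset (Fin p)),
      fPar π y = (((n : ℝ) ^ ((π.parts.card : ℝ) - p / 2) : ℝ) : ℂ) * gPar π x ∧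
      gPar π y = (((n : ℝ) ^ ((p / 2 : ℝ) - π.parts.card) : ℝ) : ℂ) * fPar π x) ∧
    (∀ H : Matrix (ZMod n) (ZMod n) ℂ, (∀ i j, H i j = x (j - i)) → _root_.IsHadamard H →
      ((∀ π : Finpartition (Finset.univ : Finset (Fin p)),
          (fPar π x).im = 0 ∧ (gPar π x).im = 0) ↔
       (∀ π : Finpartition (Finset.univ : Finset (Fin p)),
          (fPar π y).im = 0 ∧ (gPar π y).im = 0))) := by
  classical
  have hn : (0:ℝ) < n := Nat.cast_pos.mpr (Nat.pos_of_ne_zero (NeZero.ne n))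
  have key : ∀ π : Finpartition (Finset.univ : Finset (Fin p)),
      fPar π y = (((n : ℝ) ^ ((π.parts.card : ℝ) - p / 2) : ℝ) : ℂ) * gPar π x ∧
      gPar π y = (((n : ℝ) ^ ((p / 2 : ℝ) - π.parts.card) : ℝ) : ℂ) * fPar π x := by
    intro π
    have r1 : (0:ℝ) < (n : ℝ) ^ ((π.parts.card : ℝ) - p / 2) := Real.rpow_pos_of_pos hn _
    constructor
    · rw [hy]; exact fPar_mulVec n p π x
    · rw [hy]
      have h1 := fPar_mulVec n p π ((NFourier n).mulVec x)
      rw [double_mulVec, fPar_neg] at h1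
      have hC1 : (((n : ℝ) ^ ((π.parts.card : ℝ) - p / 2) : ℝ) : ℂ) ≠ 0 :=
        Complex.ofReal_ne_zero.mpr r1.ne'
      have h2 : gPar π ((NFourier n).mulVec x)
          = (((n : ℝ) ^ ((π.parts.card : ℝ) - p / 2) : ℝ) : ℂ)⁻¹ * fPar π x := by
        rw [h1, inv_mul_cancel_left₀ hC1]
      rw [h2]
      congr 1
      rw [← Complex.ofReal_inv, ← Real.rpow_neg hn.le, neg_sub]
  refine ⟨key, fun H _ _ => ?_⟩
  constructor
  · intro hx π
    obtain ⟨k1, k2⟩ := key π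
    rw [k1, k2]
    exact ⟨by simp [Complex.mul_im, (hx π).2],
      by simp [Complex.mul_im, (hx π).1]⟩
  · intro hyy π
    obtain ⟨k1, k2⟩ := key π
    have hr1 : ((n : ℝ) ^ ((π.parts.card : ℝ) - p / 2)) ≠ 0 :=
      (Real.rpow_pos_of_pos hn _).ne'
    have hr2 : ((n : ℝ) ^ ((p / 2 : ℝ) - π.parts.card)) ≠ 0 :=
      (Real.rpow_pos_of_pos hn _).ne'
    have hx1 : gPar π x
        = (((((n : ℝ) ^ ((π.parts.card : ℝ) - p / 2)))⁻¹ : ℝ) : ℂ) * fPar π y := by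
      rw [k1, Complex.ofReal_inv,
        inv_mul_cancel_left₀ (Complex.ofReal_ne_zero.mpr hr1)]
    have hx2 : fPar π x
        = (((((n : ℝ) ^ ((p / 2 : ℝ) - π.parts.card)))⁻¹ : ℝ) : ℂ) * gPar π y := by
      rw [k2, Complex.ofReal_inv,
        inv_mul_cancel_left₀ (Complex.ofReal_ne_zero.mpr hr2)]
    exact ⟨by rw [hx2]; simp [Complex.mul_im, (hyy π).2],
      by rw [hx1]; simp [Complex.mul_im, (hyy π).1]⟩
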